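/- Suppose a ≥ 1, b < 1/a, and the peak powers P̄1 > 0 and P̄2 > 0 satisfy P̄2 > (a−1)/(1−a·b). Then for all P1 ∈ [0, P̄1] and P2 ∈ [0, P̄2], Rs(P1,P2) ≤ Rs(P̄1, min(P̄2, P2*)); that is, the power pair (P̄1, min(P̄2, P2*)) maximizes the achievable secrecy rate over the power-constraint box. -/

import Mathlib

set_option maxHeartbeats 1000000


/-- `g x = (1/2) * log_2 (1 + x)`. -/
noncomputable def g (x : ℝ) : ℝ := (1 / 2) * Real.logb 2 (1 + x)

/-- The achievable secrecy rate `Rs(P1, P2)` for the Gaussian wiretap channel with a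
helping interferer, with channel gains `a`, `b` and powers `P1`, `P2`. -/
noncomputable def Rs (a b P1 P2 : ℝ) : ℝ :=
  if 1 + P2 ≤ a then 0
  else if 1 ≤ a then
    -- case `1 ≤ a < 1 + P2`
    if 1 + P1 ≤ b then g P1 - g (a * P1 / (1 + P2))
    else if 1 ≤ b then max 0 (g (P1 + b * P2) - g (a * P1 + P2))
    else max 0 (g (P1 / (1 + b * P2)) - g (a * P1 / (1 + P2)))
  else
    -- case `a < 1`, with `β1 = (1+P1)/(1+a*P1)` and `β2 = a*(1+P1)/(1+a*P1+(1-a)*P2)`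
    if 1 + P1 ≤ b then g P1 - g (a * P1 / (1 + P2))
    else if (1 + P1) / (1 + a * P1) ≤ b then g (P1 + b * P2) - g (a * P1 + P2)
    else if a * (1 + P1) / (1 + a * P1 + (1 - a) * P2) ≤ b then g P1 - g (a * P1)
    else g (P1 / (1 + b * P2)) - g (a * P1 / (1 + P2))

/-- The power threshold `P2* = (a - 1 + √((a-1)² + (1/b - a)(a - b + (1-b) a P̄1))) / (1 - a b)`. -/
noncomputable def P2star (a b Pbar1 : ℝ) : ℝ :=
  (a - 1 + Real.sqrt ((a - 1) ^ 2 + (1 / b - a) * (a - b + (1 - b) * a * Pbar1))) / (1 - a * b)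

lemma g_sub_le {x1 y1 x2 y2 : ℝ} (hx1 : 0 ≤ x1) (hy1 : 0 ≤ y1) (hx2 : 0 ≤ x2) (hy2 : 0 ≤ y2)
    (h : (1 + x1) * (1 + y2) ≤ (1 + x2) * (1 + y1)) : g x1 - g y1 ≤ g x2 - g y2 := by
  have p1 : (0:ℝ) < 1 + x1 := by linarith
  have p2 : (0:ℝ) < 1 + y1 := by linarith
  have p3 : (0:ℝ) < 1 + x2 := by linarith
  have p4 : (0:ℝ) < 1 + y2 := by linarith
  have hlog : Real.log ((1+x1)*(1+y2)) ≤ Real.log ((1+x2)*(1+y1)) :=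
    Real.log_le_log (by positivity) h
  rw [Real.log_mul (ne_of_gt p1) (ne_of_gt p4), Real.log_mul (ne_of_gt p3) (ne_of_gt p2)] at hlog
  have h2 : (0:ℝ) < 2 * Real.log 2 := by positivity
  have e : ∀ A B : ℝ, (1:ℝ)/2 * (A / Real.log 2) - 1/2 * (B / Real.log 2)
      = (A - B)/(2*Real.log 2) := by intros; ring
  simp only [g, Real.logb]
  rw [e, e]
  exact (div_le_div_iff_of_pos_right h2).mpr (by linarith)

lemma keylem {a b u v x y : ℝ} (ha : 0 ≤ a) (hb : 0 ≤ b) (hu : 0 ≤ u) (hv : 0 ≤ v)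
    (hx : 0 ≤ x) (hy : 0 ≤ y)
    (hpoly : ((1+b*u+x)*(1+v+a*y))*((1+b*v)*(1+u)) ≤ ((1+b*v+y)*(1+u+a*x))*((1+b*u)*(1+v))) :
    g (x/(1+b*u)) - g (a*x/(1+u)) ≤ g (y/(1+b*v)) - g (a*y/(1+v)) := by
  have pbu : (0:ℝ) < 1 + b*u := by positivity
  have pbv : (0:ℝ) < 1 + b*v := by positivity
  have pu : (0:ℝ) < 1 + u := by linarith
  have pv : (0:ℝ) < 1 + v := by linarith
  apply g_sub_le (by positivity) (by positivity) (by positivity) (by positivity)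
  have e1 : 1 + x/(1+b*u) = (1+b*u+x)/(1+b*u) := by field_simp
  have e2 : 1 + a*y/(1+v) = (1+v+a*y)/(1+v) := by field_simp
  have e3 : 1 + y/(1+b*v) = (1+b*v+y)/(1+b*v) := by field_simp
  have e4 : 1 + a*x/(1+u) = (1+u+a*x)/(1+u) := by field_simp
  rw [e1, e2, e3, e4, div_mul_div_comm, div_mul_div_comm,
    div_le_div_iff₀ (by positivity) (by positivity)]
  nlinarith [hpoly]

/-- If `a ≥ 1`, `0 < b < 1/a` and `P̄2 > (a-1)/(1-ab)`, the power pair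
`(P̄1, min P̄2 P2*)` maximizes the achievable secrecy rate over the box `[0,P̄1] × [0,P̄2]`. -/
theorem stmt7 (a b Pbar1 Pbar2 : ℝ) (ha : 1 ≤ a) (hb0 : 0 < b) (hb : b < 1 / a)
    (hPbar1 : 0 < Pbar1) (hPbar2 : 0 < Pbar2) (h : (a - 1) / (1 - a * b) < Pbar2) :
    ∀ P1 ∈ Set.Icc (0 : ℝ) Pbar1, ∀ P2 ∈ Set.Icc (0 : ℝ) Pbar2,
      Rs a b P1 P2 ≤ Rs a b Pbar1 (min Pbar2 (P2star a b Pbar1)) := by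
  intro P1 hP1 P2 hP2
  obtain ⟨hP10, hP11⟩ := hP1
  obtain ⟨hP20, hP21⟩ := hP2
  have ha0 : (0:ℝ) < a := by linarith
  have hab : a * b < 1 := by
    have := (lt_div_iff₀ ha0).mp hb
    linarith [this]
  have h1ab : (0:ℝ) < 1 - a * b := by linarith
  have hb1 : b < 1 := by
    have : 1/a ≤ 1 := by rw [div_le_one ha0]; exact ha
    linarith
  set K : ℝ := a - b + (1 - b) * a * Pbar1 with hKdef
  have hK : 0 < K := by
    have h1 : 0 < (1 - b) * (a * Pbar1) := mul_pos (by linarith) (by positivity)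
    rw [hKdef]; nlinarith
  set dsc : ℝ := (a - 1) ^ 2 + (1 / b - a) * (a - b + (1 - b) * a * Pbar1) with hdscdef
  have hinvb : a < 1 / b := by
    rw [lt_div_iff₀ hb0]; linarith [mul_comm a b]
  have hdsc : 0 < dsc := by
    have h1 : 0 < (1 / b - a) := by linarith
    have : 0 < (1 / b - a) * K := mul_pos h1 hK
    simp only [hdscdef]; nlinarith [sq_nonneg (a - 1)]
  set s : ℝ := Real.sqrt dsc with hsdef
  have hs0 : 0 < s := Real.sqrt_pos.mpr hdsc
  have hs2 : s ^ 2 = dsc := Real.sq_sqrt hdsc.le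
  set Pst : ℝ := P2star a b Pbar1 with hPstdef
  have hPst : Pst = (a - 1 + s) / (1 - a * b) := rfl
  have hPst0 : 0 < Pst := by
    rw [hPst]; exact div_pos (by linarith) h1ab
  have hPstt : (1 - a * b) * Pst = a - 1 + s := by
    rw [hPst]; field_simp
  have hseq : s = (1 - a * b) * Pst - (a - 1) := by linarith
  -- b * ((1-ab) Pst^2 + 2(1-a) Pst) = K
  have hbs : b * s ^ 2 = b * (a - 1) ^ 2 + (1 - a * b) * K := by
    rw [hs2, hdscdef, hKdef]; field_simp
  have hPeq : b * ((1 - a * b) * Pst ^ 2 + 2 * (1 - a) * Pst) = K := by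
    apply mul_left_cancel₀ (ne_of_gt h1ab)
    have h2 : ((1 - a * b) * Pst) ^ 2 = (a - 1 + s) ^ 2 := by rw [hPstt]
    linear_combination b*h2 + 2*(1-a)*b*hPstt + hbs
  set Q2 : ℝ := min Pbar2 Pst with hQ2def
  have hQ2Pst : Q2 ≤ Pst := min_le_right _ _
  have hQ20 : 0 ≤ Q2 := le_min hPbar2.le hPst0.le
  have hQ2a : a - 1 < Q2 := by
    have h1 : a - 1 < Pbar2 := by
      have := (div_lt_iff₀ h1ab).mp h
      nlinarith [mul_nonneg hPbar2.le (mul_nonneg ha0.le hb0.le)]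
    have h2 : a - 1 < Pst := by
      nlinarith [hPstt, mul_nonneg (by linarith : (0:ℝ) ≤ a - 1) (mul_nonneg ha0.le hb0.le)]
    exact lt_min h1 h2
  -- simplify the target
  have htgt : Rs a b Pbar1 Q2
      = max 0 (g (Pbar1 / (1 + b * Q2)) - g (a * Pbar1 / (1 + Q2))) := by
    rw [Rs, if_neg (by linarith : ¬ (1 + Q2 ≤ a)), if_pos ha,
      if_neg (by linarith : ¬ (1 + Pbar1 ≤ b)), if_neg (by linarith : ¬ (1:ℝ) ≤ b)]
  rw [htgt]
  by_cases hc0 : 1 + P2 ≤ a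
  · rw [Rs, if_pos hc0]; exact le_max_left _ _
  rw [Rs, if_neg hc0, if_pos ha, if_neg (by linarith : ¬ (1 + P1 ≤ b)),
    if_neg (by linarith : ¬ (1:ℝ) ≤ b)]
  apply max_le (le_max_left _ _)
  by_cases hlow : (1 - a * b) * P2 < a - 1
  · -- low interference power: the rate is nonpositive
    have hle0 : g (P1 / (1 + b * P2)) - g (a * P1 / (1 + P2)) ≤ 0 := by
      have hp : ((1+b*P2+P1)*(1+P2+a*0))*((1+b*P2)*(1+P2))
          ≤ ((1+b*P2+(0:ℝ))*(1+P2+a*P1))*((1+b*P2)*(1+P2)) := by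
        have h1 : (0:ℝ) ≤ P1 * (a - 1 - (1 - a*b)*P2) * ((1+b*P2)*(1+P2)) :=
          mul_nonneg (mul_nonneg hP10 (by linarith)) (by positivity)
        linarith [h1]
      have := keylem (u := P2) (v := P2) (x := P1) (y := (0:ℝ))
        (by linarith : (0:ℝ) ≤ a) hb0.le hP20 hP20 hP10 le_rfl hp
      simpa [g, Real.logb_one] using this
    exact hle0.trans (le_max_left _ _)
  push_neg at hlow
  -- step A : increase P1 to Pbar1
  have pbP2 : (0:ℝ) < 1 + b * P2 := by positivity
  have pP2 : (0:ℝ) < 1 + P2 := by linarith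
  have stepA : g (P1 / (1 + b * P2)) - g (a * P1 / (1 + P2))
      ≤ g (Pbar1 / (1 + b * P2)) - g (a * Pbar1 / (1 + P2)) := by
    apply keylem (by linarith) hb0.le hP20 hP20 hP10 (by linarith)
    have h1 : (0:ℝ) ≤ (Pbar1 - P1) * ((1 - a*b)*P2 - (a - 1)) * ((1+b*P2)*(1+P2)) :=
      mul_nonneg (mul_nonneg (by linarith) (by linarith)) (by positivity)
    linarith [h1]
  -- step B : move P2 to Q2
  have hT : 0 ≤ (P2 - Q2) * (b*(1-a*b)*P2*Q2 + b*(1-a)*(P2+Q2) - K) := by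
    rcases le_or_gt P2 Q2 with hcase | hcase
    · have hP2Pst : P2 ≤ Pst := hcase.trans hQ2Pst
      have hTle : b*(1-a*b)*P2*Q2 + b*(1-a)*(P2+Q2) - K ≤ 0 := by
        rcases le_or_gt (a - 1) ((1 - a*b) * Q2) with h1 | h1
        · have hint1 : 0 ≤ b * (Pst - P2) * ((1 - a*b)*Q2 - (a - 1)) :=
            mul_nonneg (mul_nonneg hb0.le (by linarith)) (by linarith)
          have hint2 : 0 ≤ b * (Pst - Q2) * ((1 - a*b)*Pst - (a - 1)) :=
            mul_nonneg (mul_nonneg hb0.le (by linarith)) (by rw [← hseq]; exact hs0.le)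
          nlinarith [hPeq, hint1, hint2]
        · have hint1 : 0 ≤ b * P2 * ((a - 1) - (1 - a*b)*Q2) :=
            mul_nonneg (mul_nonneg hb0.le hP20) (by linarith)
          have hint2 : 0 ≤ b * Q2 * (a - 1) :=
            mul_nonneg (mul_nonneg hb0.le hQ20) (by linarith)
          nlinarith [hint1, hint2, hK]
      exact mul_nonneg_of_nonpos_of_nonpos (by linarith) hTle
    · -- Q2 < P2 forces Q2 = Pst
      have hQPst : Q2 = Pst := by
        rcases le_total Pst Pbar2 with hmp | hmp
        · rw [hQ2def, min_eq_right hmp]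
        · exfalso
          rw [hQ2def, min_eq_left hmp] at hcase
          linarith
      have hTge : 0 ≤ b*(1-a*b)*P2*Q2 + b*(1-a)*(P2+Q2) - K := by
        rw [hQPst]
        have hint : 0 ≤ b * (P2 - Pst) * ((1 - a*b)*Pst - (a - 1)) :=
          mul_nonneg (mul_nonneg hb0.le (by rw [hQPst] at hcase; linarith))
            (by rw [← hseq]; exact hs0.le)
        nlinarith [hPeq, hint]
      exact mul_nonneg (by linarith) hTge
  have stepB : g (Pbar1 / (1 + b * P2)) - g (a * Pbar1 / (1 + P2))
      ≤ g (Pbar1 / (1 + b * Q2)) - g (a * Pbar1 / (1 + Q2)) := by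
    apply keylem (by linarith) hb0.le hP20 hQ20 hPbar1.le hPbar1.le
    have h1 : 0 ≤ Pbar1 * ((P2 - Q2) * (b*(1-a*b)*P2*Q2 + b*(1-a)*(P2+Q2) - K)) :=
      mul_nonneg hPbar1.le hT
    rw [hKdef] at h1
    linarith [h1]
  exact le_trans (le_trans stepA stepB) (le_max_right _ _)
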